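/- Let h : ℝ^n → ℝ be a convex polynomial that is bounded below on ℝ^n. Then h attains its infimum on ℝ^n, i.e., there exists x* ∈ ℝ^n with h(x*) = inf_{x ∈ ℝ^n} h(x). -/

import Mathlib

set_option maxRecDepth 8000
set_option maxHeartbeats 1000000
open Polynomial Filter

lemma line_eval_exists {N : ℕ} (p : MvPolynomial (Fin N) ℝ) (x d : Fin N → ℝ) :
    ∃ q : Polynomial ℝ, ∀ t : ℝ, q.eval t = MvPolynomial.eval (x + t • d) p := by
  refine ⟨MvPolynomial.eval₂ Polynomial.C
    (fun i => Polynomial.C (x i) + Polynomial.C (d i) * Polynomial.X) p, fun t => ?_⟩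
  have h1 := MvPolynomial.eval₂_comp_left (Polynomial.evalRingHom t) Polynomial.C
    (fun i => Polynomial.C (x i) + Polynomial.C (d i) * Polynomial.X) p
  simp only [Polynomial.coe_evalRingHom] at h1
  show Polynomial.eval t _ = _
  rw [h1]
  have h2 : (Polynomial.evalRingHom t).comp Polynomial.C = RingHom.id ℝ := by
    ext a; simp
  rw [h2]
  have h3 : ((Polynomial.eval t) ∘ fun i => Polynomial.C (x i) + Polynomial.C (d i) * Polynomial.X)
      = (x + t • d) := by
    funext i
    simp only [Function.comp_apply, Polynomial.eval_add, Polynomial.eval_C, Polynomial.eval_mul,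
      Polynomial.eval_X, Pi.add_apply, Pi.smul_apply, smul_eq_mul]
    ring
  rw [h3, MvPolynomial.eval₂_id]

lemma poly_const_of_bdd (q : Polynomial ℝ) (lo hi : ℝ)
    (hb : ∀ t : ℝ, 0 ≤ t → lo ≤ q.eval t ∧ q.eval t ≤ hi) : ∀ t : ℝ, q.eval t = q.eval 0 := by
  have hdeg : q.degree ≤ 0 := by
    by_contra hd
    push_neg at hd
    have h2 := Polynomial.abs_tendsto_atTop q hd
    obtain ⟨t, ht, ht2⟩ :=
      ((h2.eventually_ge_atTop (max |lo| |hi| + 1)).and (eventually_ge_atTop (0:ℝ))).exists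
    obtain ⟨hl, hr⟩ := hb t ht2
    have : |q.eval t| ≤ max |lo| |hi| := by
      apply abs_le.2
      constructor
      · calc -(max |lo| |hi|) ≤ -|lo| := by simp
          _ ≤ lo := neg_abs_le lo
          _ ≤ _ := hl
      · exact hr.trans ((le_abs_self hi).trans (le_max_right _ _))
    linarith
  intro t
  rw [Polynomial.eq_C_of_degree_le_zero hdeg]
  simp

/-- A convex polynomial bounded below attains its infimum on ℝⁿ. -/
theorem convex_poly_bddBelow_attains_inf {n : ℕ}
    (p : MvPolynomial (Fin n) ℝ) (h : (Fin n → ℝ) → ℝ)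
    (hh : ∀ x, h x = MvPolynomial.eval x p)
    (hconv : ConvexOn ℝ Set.univ h)
    (hbd : BddBelow (Set.range h)) :
    ∃ xs : Fin n → ℝ, h xs = ⨅ x : Fin n → ℝ, h x := by
  induction n with
  | zero =>
    have hx : ∀ x : Fin 0 → ℝ, x = 0 := fun x => funext fun i => i.elim0
    refine ⟨0, ?_⟩
    have hr : Set.range h = {h 0} := by
      ext v
      constructor
      · rintro ⟨x, rfl⟩
        rw [hx x]
        rfl
      · rintro rfl
        exact ⟨0, rfl⟩
    show h 0 = sInf (Set.range h)
    rw [hr, csInf_singleton]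
  | succ n ih =>
    have hcont : Continuous h := by
      have he : h = fun x => MvPolynomial.eval x p := funext hh
      rw [he]; exact MvPolynomial.continuous_eval p
    have hne : (Set.range h).Nonempty := ⟨h 0, ⟨0, rfl⟩⟩
    set m := sInf (Set.range h) with hm
    have hinf : (⨅ x : Fin (n+1) → ℝ, h x) = m := rfl
    rw [hinf]
    by_cases hattain : ∃ x, h x = m
    · exact hattain
    push_neg at hattain
    exfalso
    have hml : ∀ x, m ≤ h x := fun x => csInf_le hbd ⟨x, rfl⟩
    have hex : ∀ ε : ℝ, 0 < ε → ∃ x, h x < m + ε := by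
      intro ε hε
      obtain ⟨v, ⟨x, rfl⟩, hv⟩ := exists_lt_of_csInf_lt hne (by linarith : m < m + ε)
      exact ⟨x, hv⟩
    obtain ⟨x0, hx0⟩ := hex 1 one_pos
    -- near-minimizers are unbounded (else min would be attained)
    have hunbdd : ∀ R : ℝ, ∃ x, h x ≤ m + 1 ∧ R < ‖x - x0‖ := by
      intro R
      by_contra hc
      push_neg at hc
      set S : Set (Fin (n+1) → ℝ) := {x | h x ≤ m + 1} with hS
      have hSclosed : IsClosed S := IsClosed.preimage hcont isClosed_Iic
      have hSsub : S ⊆ Metric.closedBall x0 R := by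
        intro x hx
        simpa [Metric.mem_closedBall, dist_eq_norm] using hc x hx
      have hScompact : IsCompact S :=
        (isCompact_closedBall x0 R).of_isClosed_subset hSclosed hSsub
      obtain ⟨z, hzS, hz⟩ := hScompact.exists_isMinOn ⟨x0, hx0.le⟩ hcont.continuousOn
      have hzm : h z = m := by
        refine le_antisymm ?_ (hml z)
        refine le_of_forall_pos_le_add fun ε hε => ?_
        obtain ⟨x, hx⟩ := hex (min ε 1) (lt_min hε one_pos)
        have hxS : x ∈ S := le_of_lt (hx.trans_le (by simp [add_le_add_iff_left]))
        have := hz hxS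
        have : h z ≤ h x := this
        have h2 : h x < m + ε := hx.trans_le (by simp [add_le_add_iff_left])
        linarith
      exact hattain z hzm
    choose y hy1 hy2 using fun k : ℕ => hunbdd k
    have hypos : ∀ k : ℕ, (0:ℝ) < ‖y k - x0‖ := fun k =>
      lt_of_le_of_lt (Nat.cast_nonneg k) (hy2 k)
    set u : ℕ → (Fin (n+1) → ℝ) := fun k => ‖y k - x0‖⁻¹ • (y k - x0) with hu
    have husphere : ∀ k, u k ∈ Metric.sphere (0 : Fin (n+1) → ℝ) 1 := by
      intro k
      simp only [hu, mem_sphere_iff_norm, sub_zero, norm_smul, norm_inv, norm_norm]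
      exact inv_mul_cancel₀ (hypos k).ne'
    obtain ⟨d, hd, φ, hφ, hφtend⟩ :=
      (isCompact_sphere (0 : Fin (n+1) → ℝ) 1).tendsto_subseq husphere
    have hdnorm : ‖d‖ = 1 := by simpa using hd
    have hdne : d ≠ 0 := by intro h0; rw [h0] at hdnorm; simp at hdnorm
    -- onward convexity bound along the ray
    have hseg : ∀ (k : ℕ) (t : ℝ), 0 ≤ t → t ≤ ‖y k - x0‖ → h (x0 + t • u k) ≤ m + 1 := by
      intro k t ht htle
      set r := ‖y k - x0‖ with hr
      have hrpos := hypos k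
      have hl1 : t / r ≤ 1 := (div_le_one hrpos).2 htle
      have hl0 : 0 ≤ t / r := div_nonneg ht hrpos.le
      have heq : x0 + t • u k = (1 - t/r) • x0 + (t/r) • y k := by
        simp only [hu, smul_smul, smul_sub, sub_smul, one_smul]
        rw [div_eq_mul_inv]
        abel
      have := hconv.2 (Set.mem_univ x0) (Set.mem_univ (y k))
        (by linarith : (0:ℝ) ≤ 1 - t/r) hl0 (by ring)
      rw [← heq] at this
      calc h (x0 + t • u k) ≤ (1 - t/r) * h x0 + (t/r) * h (y k) := this
        _ ≤ (1 - t/r) * (m+1) + (t/r) * (m+1) := by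
            have := hy1 k
            nlinarith [hx0.le]
        _ = m + 1 := by ring
    have hray : ∀ t : ℝ, 0 ≤ t → h (x0 + t • d) ≤ m + 1 := by
      intro t ht
      have htend : Filter.Tendsto (fun k => h (x0 + t • u (φ k))) Filter.atTop
          (nhds (h (x0 + t • d))) := by
        apply (hcont.tendsto _).comp
        exact (tendsto_const_nhds.add ((hφtend).const_smul t))
      refine le_of_tendsto htend ?_
      have hev : ∀ᶠ k in Filter.atTop, t ≤ ‖y (φ k) - x0‖ := by
        filter_upwards [Filter.eventually_ge_atTop (Nat.ceil t)] with k hk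
        have h1 : (k:ℝ) ≥ t := (Nat.ceil_le.1 hk)
        have h2 : ((φ k : ℕ):ℝ) ≥ (k:ℝ) := by exact_mod_cast hφ.le_apply
        have := hy2 (φ k)
        linarith
      filter_upwards [hev] with k hk
      exact hseg (φ k) t ht hk
    -- h is nonincreasing in direction d
    have hdec : ∀ (x : Fin (n+1) → ℝ) (t : ℝ), 0 ≤ t → h (x + t • d) ≤ h x := by
      intro x t ht
      have key : ∀ l : ℝ, l ∈ Set.Ioo (0:ℝ) 1 →
          h (x + t • d) ≤ (1-l) * h ((1-l)⁻¹ • (x - l • x0)) + l * (m+1) := by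
        intro l hl
        obtain ⟨hl0, hl1⟩ := hl
        have hne1 : (1:ℝ) - l ≠ 0 := by linarith
        have heq : x + t • d = (1-l) • ((1-l)⁻¹ • (x - l • x0)) + l • (x0 + (t/l) • d) := by
          rw [smul_smul, mul_inv_cancel₀ hne1, one_smul, smul_add, smul_smul,
            mul_div_cancel₀ _ hl0.ne']
          abel
        have := hconv.2 (Set.mem_univ ((1-l)⁻¹ • (x - l • x0)))
          (Set.mem_univ (x0 + (t/l) • d)) (by linarith : (0:ℝ) ≤ 1 - l) hl0.le (by ring)
        simp only [smul_eq_mul] at this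
        rw [← heq] at this
        refine this.trans ?_
        have := hray (t/l) (div_nonneg ht hl0.le)
        nlinarith
      have htend : Filter.Tendsto
          (fun l : ℝ => (1-l) * h ((1-l)⁻¹ • (x - l • x0)) + l * (m+1))
          (nhdsWithin 0 (Set.Ioi 0)) (nhds (h x)) := by
        have t1 : Filter.Tendsto (fun l : ℝ => (1:ℝ)-l) (nhds 0) (nhds 1) := by
          have hc : Continuous (fun l : ℝ => (1:ℝ)-l) := continuous_const.sub continuous_id
          simpa using hc.tendsto 0
        have t2 : Filter.Tendsto (fun l : ℝ => (1-l)⁻¹ • (x - l • x0)) (nhds 0) (nhds x) := by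
          have t3 : Filter.Tendsto (fun l : ℝ => x - l • x0) (nhds 0) (nhds x) := by
            have hc : Continuous (fun l : ℝ => x - l • x0) :=
              continuous_const.sub (continuous_id.smul continuous_const)
            simpa using hc.tendsto 0
          have := (t1.inv₀ one_ne_zero).smul t3
          simpa using this
        have t4 : Filter.Tendsto (fun l : ℝ => h ((1-l)⁻¹ • (x - l • x0))) (nhds 0)
            (nhds (h x)) := (hcont.tendsto x).comp t2
        have hc2 : Continuous (fun l : ℝ => l * (m+1)) := continuous_id.mul continuous_const
        have t5 := (t1.mul t4).add (hc2.tendsto 0)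
        have : Filter.Tendsto
            (fun l : ℝ => (1-l) * h ((1-l)⁻¹ • (x - l • x0)) + l * (m+1))
            (nhds 0) (nhds (h x)) := by
          simpa using t5
        exact this.mono_left nhdsWithin_le_nhds
      refine ge_of_tendsto htend ?_
      filter_upwards [Ioo_mem_nhdsGT_of_mem (Set.mem_Ico.2 ⟨le_refl 0, one_pos⟩)] with l hl
      exact key l hl
    -- along d, h is constant
    have hconst : ∀ (x : Fin (n+1) → ℝ) (t : ℝ), h (x + t • d) = h x := by
      intro x t
      obtain ⟨q, hq⟩ := line_eval_exists p x d
      have hq' : ∀ s : ℝ, q.eval s = h (x + s • d) := by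
        intro s; rw [hq, ← hh]
      have hb : ∀ s : ℝ, 0 ≤ s → m ≤ q.eval s ∧ q.eval s ≤ h x := by
        intro s hs
        rw [hq' s]
        exact ⟨hml _, hdec x s hs⟩
      have := poly_const_of_bdd q m (h x) hb t
      rw [hq' t, hq' 0] at this
      simpa using this
    -- reduce dimension
    obtain ⟨j, hj⟩ : ∃ j, d j ≠ 0 := by
      by_contra hc
      push_neg at hc
      exact hdne (funext hc)
    set ι : (Fin n → ℝ) → (Fin (n+1) → ℝ) := fun y => j.insertNth 0 y with hι
    set h₂ : (Fin n → ℝ) → ℝ := fun y => h (ι y) with hh₂def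
    set g : Fin (n+1) → MvPolynomial (Fin n) ℝ :=
      j.insertNth (0 : MvPolynomial (Fin n) ℝ) (fun k => MvPolynomial.X k) with hg
    set p₂ : MvPolynomial (Fin n) ℝ := MvPolynomial.bind₁ g p with hp₂
    have hh₂ : ∀ y, h₂ y = MvPolynomial.eval y p₂ := by
      intro y
      rw [hp₂, hh₂def]
      simp only
      rw [hh (ι y)]
      show MvPolynomial.eval (ι y) p =
        MvPolynomial.eval₂Hom (RingHom.id ℝ) y (MvPolynomial.bind₁ g p)
      rw [MvPolynomial.eval₂Hom_bind₁]
      have e2 : (fun i => MvPolynomial.eval₂Hom (RingHom.id ℝ) y (g i)) = ι y := by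
        funext i
        by_cases hi : i = j
        · subst hi
          simp [hg, hι, Fin.insertNth_apply_same]
        · obtain ⟨k, rfl⟩ := Fin.exists_succAbove_eq (hi : i ≠ j)
          simp [hg, hι, Fin.insertNth_apply_succAbove]
      rw [e2]
      rfl
    have hιlin : ∀ (a b : ℝ) (y z : Fin n → ℝ), a + b = 1 →
        ι (a • y + b • z) = a • ι y + b • ι z := by
      intro a b y z hab
      funext i
      by_cases hi : i = j
      · subst hi
        simp [hι, Fin.insertNth_apply_same]
      · obtain ⟨k, rfl⟩ := Fin.exists_succAbove_eq (hi : i ≠ j)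
        simp [hι, Fin.insertNth_apply_succAbove]
    have hconv₂ : ConvexOn ℝ Set.univ h₂ := by
      refine ⟨convex_univ, fun y _ z _ a b ha hb hab => ?_⟩
      have := hconv.2 (Set.mem_univ (ι y)) (Set.mem_univ (ι z)) ha hb hab
      simpa [hh₂def, hιlin a b y z hab] using this
    have hrange : Set.range h₂ = Set.range h := by
      apply Set.Subset.antisymm
      · rintro _ ⟨y, rfl⟩
        exact ⟨ι y, rfl⟩
      · rintro _ ⟨x, rfl⟩
        set c := x j / d j with hc
        refine ⟨fun k => x (j.succAbove k) - c * d (j.succAbove k), ?_⟩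
        have hxeq : ι (fun k => x (j.succAbove k) - c * d (j.succAbove k)) = x + (-c) • d := by
          funext i
          by_cases hi : i = j
          · subst hi
            simp only [hι, Fin.insertNth_apply_same, Pi.add_apply, Pi.smul_apply, smul_eq_mul,
              hc]
            field_simp
            ring
          · obtain ⟨k, rfl⟩ := Fin.exists_succAbove_eq (hi : i ≠ j)
            simp only [hι, Fin.insertNth_apply_succAbove, Pi.add_apply, Pi.smul_apply,
              smul_eq_mul]
            ring
        rw [hh₂def]
        simp only
        rw [hxeq, hconst x (-c)]
    have hbd₂ : BddBelow (Set.range h₂) := hrange ▸ hbd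
    obtain ⟨ys, hys⟩ := ih p₂ h₂ hh₂ hconv₂ hbd₂
    have : h₂ ys = m := by
      rw [hys]
      show sInf (Set.range h₂) = m
      rw [hrange]
    exact hattain (ι ys) this
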